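/- arXiv:1706.01026 — 5 statements merged into one kernel-verified Lean document; each statement's English description precedes it below -/
import Mathlib

section
/- Let M > a₁ ≥ a₂ ≥ … ≥ aₙ ≥ 1 be real numbers. Then ∑_{i=1}^{n} aᵢ · log(n/i) ≤ C · ⌈log M⌉ · ∑_{i=1}^{n} aᵢ for some universal constant C. -/
open Finset


lemma log_factorial_lb (k : ℕ) : (k:ℝ) * Real.log k - k ≤ Real.log (k.factorial) := by
  induction k with
  | zero => simp
  | succ k ih =>
    have h1 : (k.factorial : ℝ) ≠ 0 := by positivity
    have heq : Real.log ((k+1).factorial : ℝ) = Real.log ((k:ℝ)+1) + Real.log (k.factorial : ℝ) := by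
      rw [Nat.factorial_succ]; push_cast; rw [Real.log_mul (by positivity) h1]
    have hk : (k:ℝ) * Real.log ((k:ℝ)+1) ≤ (k:ℝ) * Real.log k + 1 := by
      rcases Nat.eq_zero_or_pos k with h | h
      · simp [h]
      · have hk0 : (0:ℝ) < k := by exact_mod_cast h
        have hd : Real.log ((k:ℝ)+1) - Real.log k = Real.log (((k:ℝ)+1)/k) := by
          rw [Real.log_div (by positivity) (ne_of_gt hk0)]
        have h2 : Real.log (((k:ℝ)+1)/k) ≤ ((k:ℝ)+1)/k - 1 :=
          Real.log_le_sub_one_of_pos (by positivity)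
        have h3 : (((k:ℝ)+1)/k - 1) * k = 1 := by field_simp; ring
        nlinarith [h2, hd]
    push_cast
    push_cast at heq ih
    nlinarith [heq, ih]

lemma sum_log_eq (k : ℕ) (c : ℝ) (hc : 0 < c) :
    ∑ t ∈ range k, Real.log (c / ((t:ℝ)+1)) = k * Real.log c - Real.log (k.factorial : ℝ) := by
  have : ∀ t ∈ range k, Real.log (c / ((t:ℝ)+1)) = Real.log c - Real.log ((t:ℝ)+1) := by
    intro t _; rw [Real.log_div (ne_of_gt hc) (by positivity)]
  rw [Finset.sum_congr rfl this, Finset.sum_sub_distrib]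
  congr 1
  · simp [mul_comm]
  · rw [← Real.log_prod (by intro t _; positivity)]
    congr 1
    push_cast [← Finset.prod_range_add_one_eq_factorial k]
    rfl


set_option maxHeartbeats 1000000 in
/-- If `M > a₁ ≥ … ≥ aₙ ≥ 1`, then
`∑_{i=1}^{n} aᵢ log(n/i) ≤ C ⌈log M⌉ ∑ aᵢ` for a universal constant `C`. -/
theorem weighted_log_sum_bound :
    ∃ C : ℝ, 0 < C ∧
      ∀ (n : ℕ) (_ : 0 < n) (M : ℝ) (_ : 1 < M) (a : Fin n → ℝ),
        Antitone a →
        (∀ i, 1 ≤ a i ∧ a i < M) →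
        ∑ i : Fin n, a i * Real.log ((n : ℝ) / ((i : ℕ) + 1)) ≤
          C * (⌈Real.log M⌉ : ℝ) * ∑ i : Fin n, a i := by
  refine ⟨3, by norm_num, ?_⟩
  intro n hn M hM a _ha hb
  have hM0 : (0:ℝ) < M := lt_trans one_pos hM
  have hn0 : (0:ℝ) < n := by exact_mod_cast hn
  have hlogM : 0 < Real.log M := Real.log_pos hM
  set L : ℝ := (⌈Real.log M⌉ : ℝ) with hLdef
  have hL1 : 1 ≤ L := by
    have h : (1:ℤ) ≤ ⌈Real.log M⌉ := Int.ceil_pos.mpr hlogM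
    rw [hLdef]; exact_mod_cast h
  have hL0 : 0 < L := lt_of_lt_of_le one_pos hL1
  have hLlog : Real.log M ≤ L := Int.le_ceil _
  set S := ∑ i : Fin n, a i with hSdef
  have hSn : (n:ℝ) ≤ S := by
    calc (n:ℝ) = ∑ _i : Fin n, (1:ℝ) := by simp
    _ ≤ S := Finset.sum_le_sum fun i _ => (hb i).1
  have hSpos : 0 < S := lt_of_lt_of_le hn0 hSn
  set K := ⌈(n:ℝ)/M⌉₊ with hKdef
  -- split
  have hsplit :
      ∑ i : Fin n, a i * Real.log ((n : ℝ) / ((i : ℕ) + 1)) =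
      (∑ i ∈ univ.filter (fun i : Fin n => (i:ℕ) + 1 < K), a i * Real.log ((n : ℝ) / ((i : ℕ) + 1))) +
      ∑ i ∈ univ.filter (fun i : Fin n => ¬((i:ℕ) + 1 < K)), a i * Real.log ((n : ℝ) / ((i : ℕ) + 1)) :=
    (Finset.sum_filter_add_sum_filter_not _ _ _).symm
  -- A part (big indices)
  have hA : ∑ i ∈ univ.filter (fun i : Fin n => ¬((i:ℕ) + 1 < K)), a i * Real.log ((n : ℝ) / ((i : ℕ) + 1))
      ≤ L * S := by
    have step1 : ∀ i ∈ univ.filter (fun i : Fin n => ¬((i:ℕ) + 1 < K)),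
        a i * Real.log ((n : ℝ) / ((i : ℕ) + 1)) ≤ a i * L := by
      intro i hi
      simp only [Finset.mem_filter, not_lt] at hi
      have hKle : ((n:ℝ)/M) ≤ ((i:ℕ):ℝ) + 1 := by
        have := Nat.ceil_le.mp hi.2
        push_cast at this ⊢
        linarith
      have hip : (0:ℝ) < ((i:ℕ):ℝ) + 1 := by positivity
      have hdivle : (n:ℝ) / (((i:ℕ):ℝ) + 1) ≤ M := by
        rw [div_le_iff₀ hip, mul_comm]
        exact (div_le_iff₀ hM0).mp hKle
      have hlog : Real.log ((n : ℝ) / (((i:ℕ):ℝ) + 1)) ≤ L :=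
        le_trans (Real.log_le_log (by positivity) hdivle) hLlog
      have ha0 : 0 ≤ a i := le_trans zero_le_one (hb i).1
      exact mul_le_mul_of_nonneg_left hlog ha0
    calc ∑ i ∈ univ.filter (fun i : Fin n => ¬((i:ℕ) + 1 < K)), a i * Real.log ((n : ℝ) / ((i : ℕ) + 1))
        ≤ ∑ i ∈ univ.filter (fun i : Fin n => ¬((i:ℕ) + 1 < K)), a i * L := Finset.sum_le_sum step1
      _ ≤ ∑ i : Fin n, a i * L := Finset.sum_le_sum_of_subset_of_nonneg (Finset.filter_subset _ _)
          (fun i _ _ => mul_nonneg (le_trans zero_le_one (hb i).1) (le_of_lt hL0))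
      _ = L * S := by rw [hSdef, ← Finset.sum_mul, mul_comm]
  -- B part (small indices)
  set k := min (K - 1) n with hkdef
  have hsum_eq : ∑ i ∈ univ.filter (fun i : Fin n => (i:ℕ) + 1 < K),
      Real.log ((n : ℝ) / ((i : ℕ) + 1)) = ∑ t ∈ range k, Real.log ((n:ℝ)/((t:ℝ)+1)) := by
    rw [Finset.sum_filter]
    rw [Fin.sum_univ_eq_sum_range (fun t => if t + 1 < K then Real.log ((n:ℝ)/((t:ℝ)+1)) else 0) n]
    rw [← Finset.sum_filter]
    congr 1
    ext t
    simp only [Finset.mem_filter, Finset.mem_range, hkdef, lt_min_iff]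
    omega
  have hB : ∑ i ∈ univ.filter (fun i : Fin n => (i:ℕ) + 1 < K), a i * Real.log ((n : ℝ) / ((i : ℕ) + 1))
      ≤ 2 * L * S := by
    have hlogpos : ∀ i ∈ univ.filter (fun i : Fin n => (i:ℕ) + 1 < K),
        0 ≤ Real.log ((n : ℝ) / ((i : ℕ) + 1)) := by
      intro i hi
      simp only [Finset.mem_filter] at hi
      have h1 : (((i:ℕ):ℝ) + 1) < (n:ℝ)/M := by
        have := Nat.lt_ceil.mp hi.2
        push_cast at this ⊢; linarith
      have h2 : (1:ℝ) ≤ (n:ℝ)/(((i:ℕ):ℝ)+1) := by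
        rw [le_div_iff₀ (by positivity)]
        have : ((i:ℕ):ℝ)+1 < (n:ℝ) := by
          calc ((i:ℕ):ℝ)+1 < (n:ℝ)/M := h1
          _ ≤ n := by rw [div_le_iff₀ hM0]; nlinarith
        linarith
      exact Real.log_nonneg h2
    have step1 : ∑ i ∈ univ.filter (fun i : Fin n => (i:ℕ) + 1 < K), a i * Real.log ((n : ℝ) / ((i : ℕ) + 1))
        ≤ M * ∑ i ∈ univ.filter (fun i : Fin n => (i:ℕ) + 1 < K), Real.log ((n : ℝ) / ((i : ℕ) + 1)) := by
      rw [Finset.mul_sum]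
      refine Finset.sum_le_sum fun i hi => ?_
      exact mul_le_mul_of_nonneg_right (le_of_lt (hb i).2) (hlogpos i hi)
    rw [hsum_eq] at step1
    -- bound the range sum
    have hrange : ∑ t ∈ range k, Real.log ((n:ℝ)/((t:ℝ)+1)) ≤ (k:ℝ) * Real.log n - ((k:ℝ) * Real.log k - k) := by
      rw [sum_log_eq k (n:ℝ) hn0]
      linarith [log_factorial_lb k]
    rcases Nat.eq_zero_or_pos k with hk0 | hkpos
    · rw [hk0] at step1
      simp only [Finset.range_zero, Finset.sum_empty, mul_zero] at step1
      have h0 : (0:ℝ) ≤ 2 * L * S := by positivity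
      linarith
    · -- k ≥ 1, and M * k < n
      have hkpos' : (0:ℝ) < k := by exact_mod_cast hkpos
      have hKpos : 1 ≤ K := by omega
      have hMkn : M * (k:ℝ) < n := by
        have h1 : (k:ℝ) ≤ (K:ℝ) - 1 := by
          have : k ≤ K - 1 := min_le_left _ _
          have : (k:ℝ) ≤ ((K-1 : ℕ) : ℝ) := by exact_mod_cast this
          rwa [Nat.cast_sub hKpos, Nat.cast_one] at this
        have h2 : (K:ℝ) < (n:ℝ)/M + 1 := by
          have := Nat.ceil_lt_add_one (show (0:ℝ) ≤ (n:ℝ)/M by positivity)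
          exact_mod_cast this
        have h3 : (k:ℝ) < (n:ℝ)/M := by linarith
        calc M * (k:ℝ) < M * ((n:ℝ)/M) := by nlinarith
          _ = n := by field_simp
      -- log n - log k = log M + log (n/(M*k))
      have hlogsplit : Real.log (n:ℝ) - Real.log (k:ℝ) = Real.log M + Real.log ((n:ℝ)/(M*(k:ℝ))) := by
        rw [Real.log_div (ne_of_gt hn0) (by positivity), Real.log_mul (ne_of_gt hM0) (ne_of_gt hkpos')]
        ring
      have hlb : Real.log ((n:ℝ)/(M*(k:ℝ))) ≤ (n:ℝ)/(M*(k:ℝ)) - 1 :=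
        Real.log_le_sub_one_of_pos (by positivity)
      have hfinal : (k:ℝ) * Real.log n - ((k:ℝ) * Real.log k - k) ≤ (k:ℝ) * Real.log M + (n:ℝ)/M := by
        have e1 : (k:ℝ) * Real.log n - ((k:ℝ) * Real.log k - k)
            = (k:ℝ) * (Real.log (n:ℝ) - Real.log (k:ℝ)) + k := by ring
        rw [e1, hlogsplit]
        have : (k:ℝ) * Real.log ((n:ℝ)/(M*(k:ℝ))) ≤ (n:ℝ)/M - k := by
          have hmul := mul_le_mul_of_nonneg_left hlb (le_of_lt hkpos')
          have : (k:ℝ) * ((n:ℝ)/(M*(k:ℝ)) - 1) = (n:ℝ)/M - k := by field_simp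
          linarith [hmul, this.le, this.ge]
        nlinarith
      have hMfinal : M * ((k:ℝ) * Real.log M + (n:ℝ)/M) ≤ 2 * L * S := by
        have e2 : M * ((k:ℝ) * Real.log M + (n:ℝ)/M) = (M * (k:ℝ)) * Real.log M + n := by
          field_simp
        rw [e2]
        have h4 : (M * (k:ℝ)) * Real.log M ≤ (n:ℝ) * L := by
          have : (M * (k:ℝ)) * Real.log M ≤ (n:ℝ) * Real.log M :=
            mul_le_mul_of_nonneg_right (le_of_lt hMkn) (le_of_lt hlogM)
          calc (M * (k:ℝ)) * Real.log M ≤ (n:ℝ) * Real.log M := this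
            _ ≤ (n:ℝ) * L := mul_le_mul_of_nonneg_left hLlog (le_of_lt hn0)
        have h5 : (n:ℝ) ≤ (n:ℝ) * L := le_mul_of_one_le_right (le_of_lt hn0) hL1
        have h6 : (n:ℝ) * L ≤ S * L := mul_le_mul_of_nonneg_right hSn (le_of_lt hL0)
        linarith
      calc ∑ i ∈ univ.filter (fun i : Fin n => (i:ℕ) + 1 < K), a i * Real.log ((n : ℝ) / ((i : ℕ) + 1))
          ≤ M * ∑ t ∈ range k, Real.log ((n:ℝ)/((t:ℝ)+1)) := step1
        _ ≤ M * ((k:ℝ) * Real.log M + (n:ℝ)/M) := by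
            have := le_trans hrange hfinal
            exact mul_le_mul_of_nonneg_left this (le_of_lt hM0)
        _ ≤ 2 * L * S := hMfinal
  rw [hsplit]
  have h3 : 3 * L * S = 2 * L * S + L * S := by ring
  linarith [hA, hB]
end

section
/- For a set of n c-spread arms with means θ₁ ≥ … ≥ θₙ and K = γn ≤ n/2 with γ = Ω(1) and c = O(1), the hardness parameter H^{(t,ε)} = ∑_{i=1}^{n} min{Δᵢ⁻², (Ψₜ^ε)⁻²} satisfies H^{(t,ε)} ≤ C(c,γ) · n/√ε for a constant C depending only on c and γ. More precisely, H^{(t,ε)} = O(c^{3.5} γ^{−0.5}) · n/√ε. -/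
open Finset

/-- The gap `Δᵢ` of arm `i` (arms indexed `1,…,n`, sorted decreasingly). -/
noncomputable def armGap (θ : ℕ → ℝ) (K i : ℕ) : ℝ :=
  if i ≤ K then θ i - θ (K + 1) else θ K - θ i

private lemma aux_min_sum (A B : ℝ) (hA : 0 ≤ A) (hB : 0 ≤ B) (M D : ℕ) (hD : 1 ≤ D) :
    ∑ d ∈ Icc 1 M, min (A / (d : ℝ) ^ 2) B ≤ D * B + 2 * A / D := by
  rw [← Finset.sum_filter_add_sum_filter_not (Icc 1 M) (· ≤ D)]
  have hD0 : (0:ℝ) < D := by positivity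
  gcongr ?_ + ?_
  · calc ∑ d ∈ (Icc 1 M).filter (· ≤ D), min (A / (d : ℝ) ^ 2) B
        ≤ ∑ _d ∈ (Icc 1 M).filter (· ≤ D), B :=
          Finset.sum_le_sum fun i _ => min_le_right _ _
      _ = ((Icc 1 M).filter (· ≤ D)).card * B := by rw [Finset.sum_const, nsmul_eq_mul]
      _ ≤ D * B := by
          have hsub : (Icc 1 M).filter (· ≤ D) ⊆ Icc 1 D := by
            intro d hd
            simp only [Finset.mem_filter, Finset.mem_Icc] at hd ⊢
            exact ⟨hd.1.1, hd.2⟩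
          have h1 := Finset.card_le_card hsub
          rw [Nat.card_Icc] at h1
          have : ((Icc 1 M).filter (· ≤ D)).card ≤ D := by omega
          exact mul_le_mul_of_nonneg_right (by exact_mod_cast this) hB
  · calc ∑ d ∈ (Icc 1 M).filter (fun d => ¬ d ≤ D), min (A / (d : ℝ) ^ 2) B
        ≤ ∑ d ∈ (Icc 1 M).filter (fun d => ¬ d ≤ D), A / (d : ℝ) ^ 2 :=
          Finset.sum_le_sum fun i _ => min_le_left _ _
      _ ≤ ∑ d ∈ Ioo D (M + 1), A / (d : ℝ) ^ 2 := by
          apply Finset.sum_le_sum_of_subset_of_nonneg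
          · intro d hd
            simp only [Finset.mem_filter, Finset.mem_Icc] at hd
            simp only [Finset.mem_Ioo]
            omega
          · intro i _ _; positivity
      _ = A * ∑ d ∈ Ioo D (M + 1), ((d : ℝ) ^ 2)⁻¹ := by
          rw [Finset.mul_sum]; apply Finset.sum_congr rfl; intro d _; rw [div_eq_mul_inv]
      _ ≤ A * (2 / ((D : ℝ) + 1)) :=
          mul_le_mul_of_nonneg_left (sum_Ioo_inv_sq_le D (M+1)) hA
      _ ≤ 2 * A / D := by
          rw [show A * (2 / ((D:ℝ)+1)) = 2 * A / ((D:ℝ)+1) by ring]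
          gcongr
          linarith

set_option maxHeartbeats 2000000 in
/-- For `c`-spread arms with `K = γn ≤ n/2`, `γ = Ω(1)`, `c = O(1)`, the hardness
parameter `H^{(t,ε)} = ∑ᵢ min{Δᵢ⁻², (Ψₜ^ε)⁻²}` is `O(c^{3.5} γ^{-0.5}) ⋅ n / √ε`. -/
theorem hardness_upper_bound_c_spread :
    ∃ C : ℝ, 0 < C ∧
      ∀ (n K t : ℕ) (c γ ε : ℝ) (θ : ℕ → ℝ),
        0 < n → 1 ≤ K → 2 * K ≤ n →
        1 ≤ c → 0 < γ → (K : ℝ) = γ * n →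
        0 < ε → ε < 1 →
        (∀ i ∈ Icc 1 n, 0 ≤ θ i ∧ θ i ≤ 1) →
        (∀ i ∈ Icc 1 n, ∀ j ∈ Icc 1 n, i ≤ j → θ j ≤ θ i) →  -- sorted decreasingly
        -- c-spread condition
        (∀ i ∈ Icc 1 n, ∀ j ∈ Icc 1 n,
          (|(i : ℝ) - j|) / (c * n) ≤ |θ i - θ j| ∧
          |θ i - θ j| ≤ c * (|(i : ℝ) - j|) / n) →
        -- t is the largest element of {0,…,K-1} with both tolerance conditions
        t ≤ K - 1 →
        armGap θ K (K - t) * t ≤ K * ε →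
        armGap θ K (K + t + 1) * t ≤ K * ε →
        (∀ s : ℕ, t < s → s ≤ K - 1 →
          ¬(armGap θ K (K - s) * s ≤ K * ε ∧ armGap θ K (K + s + 1) * s ≤ K * ε)) →
        (∑ i ∈ Icc 1 n,
            min ((armGap θ K i) ^ (2 : ℕ))⁻¹
              ((max ε (min (armGap θ K (K - t)) (armGap θ K (K + t + 1)))) ^ (2 : ℕ))⁻¹)
          ≤ C * c ^ ((7 : ℝ) / 2) * γ ^ (-(1 : ℝ) / 2) * n / Real.sqrt ε := by
  refine ⟨16, by norm_num, ?_⟩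
  intro n K t c γ ε θ hn hK1 h2K hc hγ hKγ hε0 hε1 hθ01 hsorted hspread htK ht1 ht2 hmax
  have hn0 : (0:ℝ) < n := by exact_mod_cast hn
  have hc0 : (0:ℝ) < c := lt_of_lt_of_le one_pos hc
  have hcn : (0:ℝ) < c * n := by positivity
  have hK1n : K + 1 ≤ n := by omega
  have hKmem : K ∈ Icc 1 n := by simp only [Finset.mem_Icc]; omega
  have hK1mem : K + 1 ∈ Icc 1 n := by simp only [Finset.mem_Icc]; omega
  -- gap lower bounds
  have gapL : ∀ i : ℕ, 1 ≤ i → i ≤ K → ((K:ℝ) + 1 - i) / (c * n) ≤ θ i - θ (K+1) := by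
    intro i h1 h2
    have hiM : i ∈ Icc 1 n := by simp only [Finset.mem_Icc]; omega
    have h := (hspread i hiM (K+1) hK1mem).1
    have hsort := hsorted i hiM (K+1) hK1mem (by omega)
    have hile : (i:ℝ) ≤ (K:ℝ) + 1 := by exact_mod_cast Nat.le_succ_of_le h2
    have e1 : |(i:ℝ) - ((K+1:ℕ):ℝ)| = (K:ℝ) + 1 - i := by
      have hv : (i:ℝ) - ((K+1:ℕ):ℝ) = -((K:ℝ) + 1 - i) := by push_cast; ring
      rw [hv, abs_neg, abs_of_nonneg (by linarith)]
    have e2 : |θ i - θ (K+1)| = θ i - θ (K+1) := abs_of_nonneg (by linarith)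
    rw [e1, e2] at h
    exact h
  have gapR : ∀ i : ℕ, K + 1 ≤ i → i ≤ n → ((i:ℝ) - K) / (c * n) ≤ θ K - θ i := by
    intro i h1 h2
    have hiM : i ∈ Icc 1 n := by simp only [Finset.mem_Icc]; omega
    have h := (hspread K hKmem i hiM).1
    have hsort := hsorted K hKmem i hiM (by omega)
    have hile : (K:ℝ) ≤ (i:ℝ) := by exact_mod_cast Nat.le_of_succ_le h1
    have e1 : |(K:ℝ) - (i:ℝ)| = (i:ℝ) - K := by
      have hv : (K:ℝ) - (i:ℝ) = -((i:ℝ) - K) := by ring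
      rw [hv, abs_neg, abs_of_nonneg (by linarith)]
    have e2 : |θ K - θ i| = θ K - θ i := abs_of_nonneg (by linarith)
    rw [e1, e2] at h
    exact h
  -- gap upper bounds
  have gapU1 : ∀ s : ℕ, s ≤ K - 1 → θ (K - s) - θ (K+1) ≤ c * ((s:ℝ) + 1) / n := by
    intro s hs
    have hiM : K - s ∈ Icc 1 n := by simp only [Finset.mem_Icc]; omega
    have h := (hspread (K - s) hiM (K+1) hK1mem).2
    have hsK : s ≤ K := by omega
    have e1 : |((K - s : ℕ):ℝ) - ((K+1:ℕ):ℝ)| = (s:ℝ) + 1 := by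
      have hv : ((K - s : ℕ):ℝ) - ((K+1:ℕ):ℝ) = -((s:ℝ) + 1) := by
        push_cast [hsK]; ring
      rw [hv, abs_neg, abs_of_nonneg (by positivity)]
    rw [e1] at h
    calc θ (K - s) - θ (K+1) ≤ |θ (K - s) - θ (K+1)| := le_abs_self _
      _ ≤ c * ((s:ℝ) + 1) / n := h
  have gapU2 : ∀ s : ℕ, K + s + 1 ≤ n → θ K - θ (K + s + 1) ≤ c * ((s:ℝ) + 1) / n := by
    intro s hs
    have hiM : K + s + 1 ∈ Icc 1 n := by simp only [Finset.mem_Icc]; omega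
    have h := (hspread K hKmem (K + s + 1) hiM).2
    have e1 : |(K:ℝ) - ((K + s + 1 : ℕ):ℝ)| = (s:ℝ) + 1 := by
      have hv : (K:ℝ) - ((K + s + 1 : ℕ):ℝ) = -((s:ℝ) + 1) := by push_cast; ring
      rw [hv, abs_neg, abs_of_nonneg (by positivity)]
    rw [e1] at h
    calc θ K - θ (K + s + 1) ≤ |θ K - θ (K + s + 1)| := le_abs_self _
      _ ≤ c * ((s:ℝ) + 1) / n := h
  set Ψt : ℝ := min (armGap θ K (K - t)) (armGap θ K (K + t + 1)) with hΨt_def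
  set Ψ : ℝ := max ε Ψt with hΨ_def
  -- Ψt lower bound
  have hg1 : armGap θ K (K - t) = θ (K - t) - θ (K+1) := by
    rw [armGap, if_pos (by omega)]
  have hg2 : armGap θ K (K + t + 1) = θ K - θ (K + t + 1) := by
    rw [armGap, if_neg (by omega)]
  have hΨt1 : ((t:ℝ) + 1) / (c * n) ≤ Ψt := by
    apply le_min
    · rw [hg1]
      have h := gapL (K - t) (by omega) (by omega)
      have hcast : ((K - t : ℕ):ℝ) = (K:ℝ) - t := by
        have htK' : t ≤ K := by omega
        push_cast [htK']; ring
      rw [hcast] at h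
      calc ((t:ℝ) + 1) / (c * n) = ((K:ℝ) + 1 - ((K:ℝ) - t)) / (c * n) := by ring
        _ ≤ _ := h
    · rw [hg2]
      have h := gapR (K + t + 1) (by omega) (by omega)
      calc ((t:ℝ) + 1) / (c * n) = (((K + t + 1 : ℕ):ℝ) - K) / (c * n) := by push_cast; ring
        _ ≤ _ := h
  have hΨtpos : 0 < Ψt := lt_of_lt_of_le (by positivity) hΨt1
  have hΨ0 : 0 < Ψ := lt_max_of_lt_left hε0
  have hΨε : ε ≤ Ψ := le_max_left _ _
  have hΨt' : Ψt ≤ Ψ := le_max_right _ _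
  have hΨinv : 1 ≤ c * n * Ψ := by
    have h1 : ((t:ℝ) + 1) / (c * n) ≤ Ψ := le_trans hΨt1 hΨt'
    have h2 : (1:ℝ) ≤ (t:ℝ) + 1 := by have := Nat.cast_nonneg (α := ℝ) t; linarith
    rw [div_le_iff₀ hcn] at h1
    nlinarith
  -- key inequality : ε γ ≤ 4 c³ Ψ²
  have hkey : ε * γ ≤ 4 * c^3 * Ψ^2 := by
    by_cases hT : t = K - 1
    · -- Ψ ≥ γ / c and Ψ ≥ ε
      have hcastK : ((t:ℝ) + 1) = (K:ℝ) := by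
        rw [hT]
        have hcK : ((K - 1 : ℕ):ℝ) = (K:ℝ) - 1 := by push_cast [hK1]; ring
        rw [hcK]; ring
      have h1 : γ ≤ c * Ψ := by
        have h0 := le_trans hΨt1 hΨt'
        rw [hcastK, hKγ, div_le_iff₀ hcn] at h0
        nlinarith
      have h2 : ε * γ ≤ Ψ * (c * Ψ) :=
        mul_le_mul hΨε h1 hγ.le hΨ0.le
      have hc2 : (1:ℝ) ≤ c^2 := by nlinarith
      have h3 : c ≤ c^3 := by nlinarith [mul_le_mul_of_nonneg_left hc2 hc0.le]
      nlinarith [sq_nonneg Ψ, mul_le_mul_of_nonneg_right h3 (sq_nonneg Ψ)]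
    · -- t + 1 still satisfies s ≤ K - 1, use maximality
      have hs : t + 1 ≤ K - 1 := by omega
      have hnb := hmax (t+1) (by omega) hs
      have hub : (K:ℝ) * ε < c * ((t:ℝ) + 1 + 1) / n * ((t:ℝ) + 1) := by
        rcases not_and_or.mp hnb with h | h
        · rw [not_le] at h
          have hgap : armGap θ K (K - (t+1)) ≤ c * ((t:ℝ) + 1 + 1) / n := by
            rw [armGap, if_pos (by omega)]
            have h5 := gapU1 (t+1) hs
            push_cast at h5
            exact h5
          calc (K:ℝ) * ε < armGap θ K (K - (t+1)) * ((t+1:ℕ):ℝ) := h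
            _ ≤ c * ((t:ℝ) + 1 + 1) / n * ((t:ℝ) + 1) := by
                push_cast
                apply mul_le_mul_of_nonneg_right hgap (by positivity)
        · rw [not_le] at h
          have hgap : armGap θ K (K + (t+1) + 1) ≤ c * ((t:ℝ) + 1 + 1) / n := by
            rw [armGap, if_neg (by omega)]
            have h5 := gapU2 (t+1) (by omega)
            push_cast at h5
            exact h5
          calc (K:ℝ) * ε < armGap θ K (K + (t+1) + 1) * ((t+1:ℕ):ℝ) := h
            _ ≤ c * ((t:ℝ) + 1 + 1) / n * ((t:ℝ) + 1) := by
                push_cast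
                apply mul_le_mul_of_nonneg_right hgap (by positivity)
      -- so γ ε n² < 2 c (t+1)²
      have ht0 : (0:ℝ) ≤ (t:ℝ) := Nat.cast_nonneg t
      have h1 : γ * ε * (n:ℝ)^2 < 2 * c * ((t:ℝ)+1)^2 := by
        rw [hKγ, div_mul_eq_mul_div, lt_div_iff₀ hn0] at hub
        nlinarith [mul_nonneg (mul_nonneg hc0.le (by linarith : (0:ℝ) ≤ (t:ℝ)+1)) ht0]
      -- and (t+1) ≤ c n Ψ
      have h2 : ((t:ℝ) + 1) ≤ c * n * Ψ := by
        have h3 := le_trans hΨt1 hΨt'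
        rw [div_le_iff₀ hcn] at h3
        linarith
      have h5 : 2 * c * ((t:ℝ)+1)^2 ≤ 2 * c^3 * (n:ℝ)^2 * Ψ^2 := by
        nlinarith [mul_le_mul h2 h2 (by positivity) (by positivity), hc0]
      have h6 : ε * γ * (n:ℝ)^2 ≤ 4 * c^3 * Ψ^2 * (n:ℝ)^2 := by nlinarith [sq_nonneg (n:ℝ)]
      exact le_of_mul_le_mul_right h6 (by positivity)
  -- abbreviations for the sum
  set B : ℝ := ((Ψ:ℝ) ^ (2:ℕ))⁻¹ with hB_def
  have hBnn : 0 ≤ B := by positivity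
  set D : ℕ := ⌈c * n * Ψ⌉₊ with hD_def
  have hD1 : 1 ≤ D := Nat.one_le_ceil_iff.mpr (by linarith)
  have hDub : (D:ℝ) ≤ c * n * Ψ + 1 := (Nat.ceil_lt_add_one (by positivity)).le
  have hDlb : c * n * Ψ ≤ (D:ℝ) := Nat.le_ceil _
  have hD0 : (0:ℝ) < D := by positivity
  -- termwise bounds
  have termL : ∀ i ∈ Icc 1 K,
      min ((armGap θ K i ^ (2:ℕ))⁻¹) B ≤ min ((c*n)^2 / ((K + 1 - i : ℕ):ℝ)^2) B := by
    intro i hi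
    simp only [Finset.mem_Icc] at hi
    have hgap : armGap θ K i = θ i - θ (K+1) := by rw [armGap, if_pos hi.2]
    have hcast : ((K + 1 - i : ℕ):ℝ) = (K:ℝ) + 1 - i := by
      have hiK : i ≤ K + 1 := by omega
      push_cast [hiK]; ring
    have hd0 : (0:ℝ) < ((K + 1 - i : ℕ):ℝ) := by
      have h1 : 1 ≤ K + 1 - i := by omega
      exact_mod_cast Nat.lt_of_lt_of_le Nat.zero_lt_one h1
    have hlb : ((K + 1 - i : ℕ):ℝ) / (c * n) ≤ armGap θ K i := by
      rw [hgap, hcast]; exact gapL i hi.1 hi.2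
    apply min_le_min _ le_rfl
    rw [show (c*n)^2 / ((K + 1 - i : ℕ):ℝ)^2 = ((((K + 1 - i : ℕ):ℝ) / (c*n))^2)⁻¹ by
      rw [div_pow, inv_div]]
    apply inv_anti₀ (by positivity)
    exact pow_le_pow_left₀ (by positivity) hlb 2
  have termR : ∀ i ∈ Icc (K+1) n,
      min ((armGap θ K i ^ (2:ℕ))⁻¹) B ≤ min ((c*n)^2 / ((i - K : ℕ):ℝ)^2) B := by
    intro i hi
    simp only [Finset.mem_Icc] at hi
    have hgap : armGap θ K i = θ K - θ i := by rw [armGap, if_neg (by omega)]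
    have hcast : ((i - K : ℕ):ℝ) = (i:ℝ) - K := by
      have hKi : K ≤ i := by omega
      push_cast [hKi]; ring
    have hlb : ((i - K : ℕ):ℝ) / (c * n) ≤ armGap θ K i := by
      rw [hgap, hcast]; exact gapR i hi.1 hi.2
    have hd0 : (0:ℝ) < ((i - K : ℕ):ℝ) := by
      have h1 : 1 ≤ i - K := by omega
      exact_mod_cast Nat.lt_of_lt_of_le Nat.zero_lt_one h1
    apply min_le_min _ le_rfl
    rw [show (c*n)^2 / ((i - K : ℕ):ℝ)^2 = ((((i - K : ℕ):ℝ) / (c*n))^2)⁻¹ by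
      rw [div_pow, inv_div]]
    apply inv_anti₀ (by positivity)
    exact pow_le_pow_left₀ (by positivity) hlb 2
  -- split the sum
  have hsplit : Icc 1 n = Icc 1 K ∪ Icc (K+1) n := by
    ext x
    simp only [Finset.mem_Icc, Finset.mem_union]
    omega
  have hdisj : Disjoint (Icc 1 K) (Icc (K+1) n) := by
    rw [Finset.disjoint_left]
    intro x hx hx'
    simp only [Finset.mem_Icc] at hx hx'
    omega
  have hsumL : ∑ i ∈ Icc 1 K, min ((armGap θ K i ^ (2:ℕ))⁻¹) B
      ≤ D * B + 2 * (c*n)^2 / D := by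
    calc ∑ i ∈ Icc 1 K, min ((armGap θ K i ^ (2:ℕ))⁻¹) B
        ≤ ∑ i ∈ Icc 1 K, min ((c*n)^2 / ((K + 1 - i : ℕ):ℝ)^2) B :=
          Finset.sum_le_sum termL
      _ = ∑ d ∈ Icc 1 K, min ((c*n)^2 / (d:ℝ)^2) B := by
          apply Finset.sum_nbij' (fun a => K + 1 - a) (fun d => K + 1 - d)
          · intro a ha; simp only [Finset.mem_Icc] at ha ⊢; omega
          · intro a ha; simp only [Finset.mem_Icc] at ha ⊢; omega
          · intro a ha; simp only [Finset.mem_Icc] at ha; omega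
          · intro a ha; simp only [Finset.mem_Icc] at ha; omega
          · intro a ha; rfl
      _ ≤ D * B + 2 * (c*n)^2 / D := aux_min_sum _ _ (by positivity) hBnn K D hD1
  have hsumR : ∑ i ∈ Icc (K+1) n, min ((armGap θ K i ^ (2:ℕ))⁻¹) B
      ≤ D * B + 2 * (c*n)^2 / D := by
    calc ∑ i ∈ Icc (K+1) n, min ((armGap θ K i ^ (2:ℕ))⁻¹) B
        ≤ ∑ i ∈ Icc (K+1) n, min ((c*n)^2 / ((i - K : ℕ):ℝ)^2) B :=
          Finset.sum_le_sum termR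
      _ = ∑ d ∈ Icc 1 (n - K), min ((c*n)^2 / (d:ℝ)^2) B := by
          apply Finset.sum_nbij' (fun a => a - K) (fun d => d + K)
          · intro a ha; simp only [Finset.mem_Icc] at ha ⊢; omega
          · intro a ha; simp only [Finset.mem_Icc] at ha ⊢; omega
          · intro a ha; simp only [Finset.mem_Icc] at ha; omega
          · intro a ha; simp only [Finset.mem_Icc] at ha; omega
          · intro a ha; rfl
      _ ≤ D * B + 2 * (c*n)^2 / D := aux_min_sum _ _ (by positivity) hBnn (n-K) D hD1
  -- the per-side bound in terms of Ψ
  have hDB : (D:ℝ) * B + 2 * (c*n)^2 / D ≤ 4 * (c * n) / Ψ := by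
    have e1 : (D:ℝ) * B ≤ 2 * (c * n) / Ψ := by
      rw [hB_def, show ((Ψ:ℝ) ^ (2:ℕ))⁻¹ = (Ψ^2)⁻¹ by norm_num,
        show (D:ℝ) * (Ψ^2)⁻¹ = (D:ℝ) / Ψ^2 by rw [div_eq_mul_inv],
        div_le_div_iff₀ (by positivity) hΨ0]
      nlinarith
    have e2 : 2 * (c*n)^2 / D ≤ 2 * (c * n) / Ψ := by
      rw [div_le_div_iff₀ hD0 hΨ0]
      nlinarith
    have e3 : 4 * (c * (n:ℝ)) / Ψ = 2 * (c * n) / Ψ + 2 * (c * n) / Ψ := by ring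
    rw [e3]; exact add_le_add e1 e2
  -- final arithmetic
  have hsε : (0:ℝ) < Real.sqrt ε := Real.sqrt_pos.mpr hε0
  have hsγ : (0:ℝ) < Real.sqrt γ := Real.sqrt_pos.mpr hγ
  have hsc : (0:ℝ) < Real.sqrt c := Real.sqrt_pos.mpr hc0
  have claim1 : Real.sqrt ε * Real.sqrt γ ≤ 2 * c * Real.sqrt c * Ψ := by
    have h1 : Real.sqrt (ε*γ) ≤ Real.sqrt (4*c^3*Ψ^2) := Real.sqrt_le_sqrt hkey
    rw [Real.sqrt_mul hε0.le] at h1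
    have h2 : Real.sqrt (4*c^3*Ψ^2) = 2*c*Real.sqrt c*Ψ := by
      rw [show 4*c^3*Ψ^2 = (2*c*Real.sqrt c*Ψ)^2 by
        rw [mul_pow, mul_pow, mul_pow, Real.sq_sqrt hc0.le]; ring]
      exact Real.sqrt_sq (by positivity)
    rw [h2] at h1
    exact h1
  have hΨinv2 : Ψ⁻¹ ≤ 2 * c * Real.sqrt c / (Real.sqrt ε * Real.sqrt γ) := by
    rw [inv_eq_one_div, div_le_div_iff₀ hΨ0 (by positivity)]
    linarith
  -- rpow facts
  have hrpow1 : γ ^ (-(1:ℝ)/2) = (Real.sqrt γ)⁻¹ := by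
    rw [show (-(1:ℝ)/2) = -(1/2) by ring, Real.rpow_neg hγ.le]
    congr 1
    exact (Real.sqrt_eq_rpow γ).symm
  have hrpow3 : c ^ ((5:ℝ)/2) = c^2 * Real.sqrt c := by
    rw [show ((5:ℝ)/2) = 2 + 1/2 by norm_num, Real.rpow_add hc0, Real.sqrt_eq_rpow,
      show (2:ℝ) = ((2:ℕ):ℝ) by norm_num, Real.rpow_natCast]
  have hrpow2 : c^2 * Real.sqrt c ≤ c ^ ((7:ℝ)/2) := by
    rw [← hrpow3]
    exact Real.rpow_le_rpow_of_exponent_le hc (by norm_num)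
  -- final chain
  calc (∑ i ∈ Icc 1 n, min ((armGap θ K i ^ (2:ℕ))⁻¹) B)
      = (∑ i ∈ Icc 1 K, min ((armGap θ K i ^ (2:ℕ))⁻¹) B)
        + ∑ i ∈ Icc (K+1) n, min ((armGap θ K i ^ (2:ℕ))⁻¹) B := by
        rw [hsplit, Finset.sum_union hdisj]
    _ ≤ 2 * ((D:ℝ) * B + 2 * (c*n)^2 / D) := by linarith
    _ ≤ 8 * (c * n) / Ψ := by
        have e3 : 8 * (c * (n:ℝ)) / Ψ = 2 * (4 * (c * n) / Ψ) := by ring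
        rw [e3]; exact mul_le_mul_of_nonneg_left hDB (by norm_num)
    _ = 8 * c * n * Ψ⁻¹ := by rw [div_eq_mul_inv]; ring
    _ ≤ 8 * c * n * (2 * c * Real.sqrt c / (Real.sqrt ε * Real.sqrt γ)) := by
        apply mul_le_mul_of_nonneg_left hΨinv2 (by positivity)
    _ = 16 * (c^2 * Real.sqrt c) * (Real.sqrt γ)⁻¹ * n / Real.sqrt ε := by
        field_simp
        ring
    _ ≤ 16 * c ^ ((7:ℝ)/2) * γ ^ (-(1:ℝ)/2) * n / Real.sqrt ε := by
        rw [hrpow1]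
        gcongr
end

section
/- Let θ₁ ≥ … ≥ θₙ be real numbers, A ⊆ {1,…,K}, B ⊆ {K+1,…,n}, S = [n]∖(A∪B), and suppose estimates θ̃ᵢ satisfy |θ̃ᵢ − θᵢ| < Δ for all i ∈ S. Let θ̃_a be the (K−|A|+1)-th largest estimate among arms in S. Then for every i ∈ S, θ̃ᵢ − θ̃_a > θᵢ − θ_{K+1} − 2Δ. -/
open Finset

/-- The `k`-th largest value of `f` over the finite set `s` (`k ≥ 1`). -/
noncomputable def kthLargest (s : Finset ℕ) (f : ℕ → ℝ) (k : ℕ) : ℝ :=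
  ((s.val.map f).sort (· ≤ ·)).getD (s.card - k) 0

lemma kthLargest_le {s : Finset ℕ} {f : ℕ → ℝ} {k : ℕ} {c : ℝ}
    (hk : 1 ≤ k) (hks : k ≤ s.card)
    (hcount : (s.filter (fun x => c < f x)).card < k) :
    kthLargest s f k ≤ c := by
  by_contra h
  push_neg at h
  set l := ((s.val.map f).sort (· ≤ ·)) with hl
  have hlen : l.length = s.card := by
    simp [hl, Multiset.length_sort]
  have hsort : l.Pairwise (· ≤ ·) := Multiset.pairwise_sort _ _
  have hidx : s.card - k < l.length := by omega
  have hgetD : kthLargest s f k = l[s.card - k] := by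
    rw [kthLargest]
    exact List.getD_eq_getElem l 0 hidx
  rw [hgetD] at h
  -- every element of drop satisfies c < ·
  have hdropP : ∀ x ∈ l.drop (s.card - k), c < x := by
    intro x hx
    obtain ⟨j, hj, rfl⟩ := List.mem_iff_getElem.mp hx
    rw [List.getElem_drop]
    have hjl : s.card - k + j < l.length := by
      rw [List.length_drop] at hj; omega
    refine lt_of_lt_of_le h ?_
    exact hsort.rel_get_of_le (a := ⟨s.card - k, hidx⟩) (b := ⟨s.card - k + j, hjl⟩)
      (by simp)
  have hcount2 : k ≤ l.countP (fun x => decide (c < x)) := by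
    have h1 : (l.drop (s.card - k)).countP (fun x => decide (c < x)) =
        (l.drop (s.card - k)).length :=
      List.countP_eq_length.mpr (fun a ha => by simpa using hdropP a ha)
    have h2 : (l.drop (s.card - k)).countP (fun x => decide (c < x)) ≤
        l.countP (fun x => decide (c < x)) :=
      (List.drop_sublist _ _).countP_le
    rw [h1, List.length_drop, hlen] at h2
    omega
  have hcoe : (l : Multiset ℝ) = s.val.map f := Multiset.sort_eq _ _
  have : Multiset.countP (fun x => c < x) (s.val.map f) = (s.filter (fun x => c < f x)).card := by
    rw [Multiset.countP_map]
    rfl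
  rw [← hcoe, Multiset.coe_countP] at this
  omega

/-- With `A ⊆ [K]`, `B ⊆ {K+1,…,n}`, `S = [n] ∖ (A ∪ B)`,
`|S| ≥ K − |A| + 1`, and estimates within `Δ` on `S`, every `i ∈ S` satisfies
`θ̃ᵢ − θ̃_a > θᵢ − θ_{K+1} − 2Δ`, where `θ̃_a` is the `(K−|A|+1)`-th largest
estimate in `S`. -/
theorem adaptiveTopK_gap_estimate
    (n K : ℕ) (hK : 1 ≤ K) (hKn : K + 1 ≤ n)
    (θ θt : ℕ → ℝ) (Δ : ℝ) (hΔ : 0 < Δ)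
    (hsorted : ∀ i ∈ Icc 1 n, ∀ j ∈ Icc 1 n, i ≤ j → θ j ≤ θ i)
    (A B : Finset ℕ)
    (hA : A ⊆ Icc 1 K) (hB : B ⊆ Icc (K + 1) n)
    (S : Finset ℕ) (hS : S = Icc 1 n \ (A ∪ B))
    (hcard : K - A.card + 1 ≤ S.card)
    (hclose : ∀ i ∈ S, |θt i - θ i| < Δ) :
    ∀ i ∈ S, θt i - kthLargest S θt (K - A.card + 1) > θ i - θ (K + 1) - 2 * Δ := by
  intro i hi
  have hiS := hi
  rw [hS, mem_sdiff, mem_Icc] at hiS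
  obtain ⟨⟨hi1, hin⟩, hiAB⟩ := hiS
  have hAcard : A.card ≤ K := by
    have := Finset.card_le_card hA
    simpa using this
  set k := K - A.card + 1 with hk
  have hfilter : S.filter (fun x => θ (K+1) + Δ < θt x) ⊆ Icc 1 K \ A := by
    intro x hx
    rw [mem_filter] at hx
    obtain ⟨hxS, hxgt⟩ := hx
    have hxclose := hclose x hxS
    have hxS' := hxS
    rw [hS, mem_sdiff, mem_Icc] at hxS'
    obtain ⟨⟨hx1, hxn⟩, hxAB⟩ := hxS'
    have hxθ : θ (K+1) < θ x := by
      have := abs_lt.mp hxclose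
      linarith [this.1, this.2]
    have hxK : x ≤ K := by
      by_contra hxK
      push_neg at hxK
      have := hsorted (K+1) (by rw [mem_Icc]; omega) x (by rw [mem_Icc]; omega) (by omega)
      linarith
    rw [mem_sdiff, mem_Icc]
    exact ⟨⟨hx1, hxK⟩, fun hxA => hxAB (mem_union_left _ hxA)⟩
  have hfcard : (S.filter (fun x => θ (K+1) + Δ < θt x)).card < k := by
    have h1 := Finset.card_le_card hfilter
    have h2 : (Icc 1 K \ A).card = K - A.card := by
      rw [Finset.card_sdiff_of_subset hA]
      simp
    omega
  have hle : kthLargest S θt k ≤ θ (K+1) + Δ :=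
    kthLargest_le (by omega) hcard hfcard
  have hic := abs_lt.mp (hclose i hi)
  linarith [hic.1, hic.2]
end

section
/- Any algorithm that, given a coin which is either (1/2+η)-biased or (1/2−η)-biased (η = 10⁻⁴), outputs the correct bias with probability at least 1−ε while being allowed to output 'unknown' with probability at most 0.9, must use Ω(log(1/ε)) coin tosses. -/
open Finset

/-- Probability, under i.i.d. `p`-biased tosses, of the set of toss sequences
satisfying `E`. -/
noncomputable def tossProb (m : ℕ) (p : ℝ) (E : (Fin m → Bool) → Prop)
    [DecidablePred E] : ℝ :=
  ∑ x : Fin m → Bool, if E x then ∏ i, (if x i then p else 1 - p) else 0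

/-- Lower bound for the coin-tossing problem: any algorithm (a function of the
`m` toss outcomes, outputting `some true` for bias `1/2+η`, `some false` for
bias `1/2−η`, or `none` for "unknown") that outputs `unknown` with probability
at most `0.9` and errs with probability at most `ε` (under either bias,
`η = 10⁻⁴`) must use `m = Ω(log(1/ε))` tosses. -/
theorem coin_tossing_lower_bound :
    ∃ C : ℝ, 0 < C ∧ ∃ ε₀ : ℝ, 0 < ε₀ ∧
      ∀ ε : ℝ, 0 < ε → ε < ε₀ →
      ∀ (m : ℕ) (f : (Fin m → Bool) → Option Bool),
        tossProb m (1 / 2 + 1 / 10000) (fun x => f x = none) ≤ 0.9 →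
        tossProb m (1 / 2 - 1 / 10000) (fun x => f x = none) ≤ 0.9 →
        tossProb m (1 / 2 + 1 / 10000) (fun x => f x = some false) ≤ ε →
        tossProb m (1 / 2 - 1 / 10000) (fun x => f x = some true) ≤ ε →
        C * Real.log (1 / ε) ≤ (m : ℝ) := by
  have hr1 : (1:ℝ) < 5001/4999 := by norm_num
  have hlr : 0 < Real.log (5001/4999) := Real.log_pos hr1
  refine ⟨1/(2*Real.log (5001/4999)), by positivity, 1/400, by norm_num, ?_⟩
  intro ε hε hε' m f h1 _ h3 h4
  set r : ℝ := 5001/4999 with hrdef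
  -- total probability is 1
  have htot : ∀ p : ℝ, ∑ x : Fin m → Bool, ∏ i, (if x i then p else 1-p) = 1 := by
    intro p
    have := Finset.prod_univ_sum (fun _ : Fin m => (Finset.univ : Finset Bool))
      (fun _ b => if b then p else 1-p)
    rw [Fintype.piFinset_univ] at this
    rw [← this]; simp
  -- partition of unity
  have hpart : ∀ p : ℝ,
      tossProb m p (fun x => f x = none) + tossProb m p (fun x => f x = some false)
        + tossProb m p (fun x => f x = some true) = 1 := by
    intro p
    unfold tossProb
    rw [← Finset.sum_add_distrib, ← Finset.sum_add_distrib]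
    have : ∀ x : Fin m → Bool,
        (((if f x = none then ∏ i, (if x i then p else 1-p) else 0) +
          if f x = some false then ∏ i, (if x i then p else 1-p) else 0) +
          if f x = some true then ∏ i, (if x i then p else 1-p) else 0)
          = ∏ i, (if x i then p else 1-p) := by
      intro x
      rcases h : f x with _ | b
      · simp [h]
      · cases b <;> simp [h]
    rw [Finset.sum_congr rfl (fun x _ => this x), htot p]
  -- pointwise likelihood ratio bound
  have hw : ∀ x : Fin m → Bool,
      (∏ i, (if x i then (1/2+1/10000 : ℝ) else 1-(1/2+1/10000)))
        ≤ r^m * ∏ i, (if x i then (1/2-1/10000:ℝ) else 1-(1/2-1/10000)) := by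
    intro x
    have : r^m * ∏ i, (if x i then (1/2-1/10000:ℝ) else 1-(1/2-1/10000))
        = ∏ i : Fin m, r * (if x i then (1/2-1/10000:ℝ) else 1-(1/2-1/10000)) := by
      rw [Finset.prod_mul_distrib, Finset.prod_const, Finset.card_univ, Fintype.card_fin]
    rw [this]
    apply Finset.prod_le_prod
    · intro i _; split <;> norm_num
    · intro i _; cases h : x i <;> simp [h, hrdef] <;> norm_num
  have hratio : tossProb m (1/2+1/10000) (fun x => f x = some true)
      ≤ r^m * tossProb m (1/2-1/10000) (fun x => f x = some true) := by
    unfold tossProb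
    rw [Finset.mul_sum]
    apply Finset.sum_le_sum
    intro x _
    by_cases h : f x = some true
    · simp only [h, if_pos]; exact hw x
    · simp [h]
  -- lower bound on P₊(some true)
  have hlb : (1:ℝ)/20 ≤ tossProb m (1/2+1/10000) (fun x => f x = some true) := by
    have := hpart (1/2+1/10000)
    have hε20 : ε ≤ 1/400 := le_of_lt hε'
    nlinarith
  have hrm : (1:ℝ)/(20*ε) ≤ r^m := by
    have h5 : tossProb m (1/2-1/10000) (fun x => f x = some true) ≤ ε := h4
    have hrpos : (0:ℝ) < r^m := by positivity
    have : (1:ℝ)/20 ≤ r^m * ε := le_trans hlb (le_trans hratio (by nlinarith))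
    rw [div_le_iff₀ (by positivity)]
    nlinarith
  have hlog : Real.log (1/(20*ε)) ≤ (m:ℝ) * Real.log r := by
    have := Real.log_le_log (by positivity) hrm
    rwa [Real.log_pow] at this
  have hsplit : Real.log (1/(20*ε)) = Real.log (1/ε) - Real.log 20 := by
    rw [one_div, one_div, Real.log_inv, Real.log_inv, Real.log_mul (by norm_num) (ne_of_gt hε)]
    ring
  have h20 : Real.log 20 ≤ (1/2) * Real.log (1/ε) := by
    have h400 : (400:ℝ) ≤ 1/ε := by
      rw [le_div_iff₀ hε]; nlinarith
    have := Real.log_le_log (by norm_num : (0:ℝ) < 400) h400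
    have h2 : Real.log 400 = 2 * Real.log 20 := by
      rw [show (400:ℝ) = 20^2 by norm_num, Real.log_pow]; push_cast; ring
    linarith
  rw [div_mul_eq_mul_div, one_mul, div_le_iff₀ (by positivity)]
  rw [hsplit] at hlog
  nlinarith
end

section
/- For positive reals where each arm i is pulled at most ∑_{j=1}^{rᵢ} 2^{2j} ln(2nj²/δ) times with rᵢ ≤ log₂ min{Δᵢ⁻¹, (Δₜ^ε)⁻¹} + O(1), the total number of pulls over all n arms is O((log log (Δₜ^ε)⁻¹ + log n + log δ⁻¹) · ∑_{i=1}^{n} min{Δᵢ⁻², (Δₜ^ε)⁻²}). -/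
open Finset

lemma geom_aux (R : ℕ) : ∑ j ∈ Icc 1 R, (2:ℝ)^(2*j) ≤ 4/3 * 4^R := by
  induction R with
  | zero => simp; norm_num
  | succ R ih =>
    rw [Finset.sum_Icc_succ_top (Nat.succ_le_succ (Nat.zero_le R))]
    have h : (2:ℝ)^(2*(R+1)) = 4 * 4^R := by
      rw [pow_mul]; norm_num [pow_succ]; ring
    have h2 : (4:ℝ)^(R+1) = 4 * 4^R := by rw [pow_succ]; ring
    rw [h, h2]
    linarith

/-- Total sample complexity of AdaptiveTopK: if arm `i` is pulled at most
`∑_{j=1}^{rᵢ} 2^{2j} ln(2nj²/δ)` times with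
`rᵢ ≤ log₂ min{Δᵢ⁻¹, (Δₜ^ε)⁻¹} + O(1)`, the total number of pulls is
`O((log log (Δₜ^ε)⁻¹ + log n + log δ⁻¹) · ∑ᵢ min{Δᵢ⁻², (Δₜ^ε)⁻²})`. -/
theorem adaptiveTopK_sample_complexity
    (c₀ : ℝ) (hc₀ : 0 ≤ c₀) :
    ∃ C : ℝ, 0 < C ∧
      ∀ (n : ℕ) (_ : 2 ≤ n) (Δ : Fin n → ℝ) (Dte δ : ℝ) (r : Fin n → ℕ),
        (∀ i, 0 < Δ i) → 0 < Dte → Dte ≤ 1 / 2 → 0 < δ → δ < 1 →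
        (∀ i, (r i : ℝ) ≤ Real.logb 2 (min (Δ i)⁻¹ Dte⁻¹) + c₀) →
        ∑ i : Fin n, ∑ j ∈ Icc 1 (r i),
            (2 : ℝ) ^ (2 * j) * Real.log (2 * n * j ^ 2 / δ) ≤
          C * (Real.log (Real.log Dte⁻¹) + Real.log n + Real.log δ⁻¹) *
            ∑ i : Fin n, min ((Δ i) ^ (2 : ℕ))⁻¹ (Dte ^ (2 : ℕ))⁻¹ := by
  have hl2 : (0:ℝ) < Real.log 2 := Real.log_pos one_lt_two
  have hl2lt1 : Real.log 2 < 1 := by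
    have := Real.log_two_lt_d9; linarith
  have hll2neg : Real.log (Real.log 2) < 0 := Real.log_neg hl2 hl2lt1
  have hhalf : (2:ℝ)⁻¹ < Real.log 2 := by
    have := Real.log_two_gt_d9; norm_num; linarith
  have hf0 : 0 < Real.log 2 + Real.log (Real.log 2) := by
    have h1 : Real.log (2:ℝ)⁻¹ < Real.log (Real.log 2) :=
      Real.log_lt_log (by norm_num) hhalf
    rw [Real.log_inv] at h1
    linarith
  set f0 : ℝ := Real.log 2 + Real.log (Real.log 2) with hf0def
  set K0 : ℝ := Real.log (1 + c₀) - Real.log (Real.log 2) with hK0def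
  have hlog1c : 0 ≤ Real.log (1 + c₀) := Real.log_nonneg (by linarith)
  have hK0 : 0 < K0 := by rw [hK0def]; linarith
  set C2 : ℝ := 2 + (Real.log 2 + 2 * K0) / f0 with hC2def
  have hC2 : 0 < C2 := by
    have : 0 ≤ (Real.log 2 + 2 * K0) / f0 := by positivity
    rw [hC2def]; linarith
  refine ⟨C2 * (4/3) * (4:ℝ) ^ c₀, by positivity, ?_⟩
  intro n hn Δ Dte δ r hΔ hDte hDte2 hδ hδ1 hr
  set L : ℝ := Real.log Dte⁻¹ with hLdef
  have h2D : (2:ℝ) ≤ Dte⁻¹ := by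
    rw [show (2:ℝ) = ((1:ℝ)/2)⁻¹ by norm_num]
    exact inv_anti₀ hDte hDte2
  have hL : Real.log 2 ≤ L := Real.log_le_log two_pos h2D
  have hlogL : Real.log (Real.log 2) ≤ Real.log L :=
    Real.log_le_log hl2 hL
  set F : ℝ := Real.log L + Real.log n + Real.log δ⁻¹ with hFdef
  have hlogn : Real.log 2 ≤ Real.log n :=
    Real.log_le_log two_pos (by exact_mod_cast hn)
  have hlogδ : 0 < Real.log δ⁻¹ :=
    Real.log_pos (one_lt_inv₀ hδ |>.mpr hδ1)
  have hF : f0 ≤ F := by rw [hFdef, hf0def]; linarith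
  have hFpos : 0 < F := lt_of_lt_of_le hf0 hF
  have key : ∀ i : Fin n,
      ∑ j ∈ Icc 1 (r i), (2 : ℝ) ^ (2 * j) * Real.log (2 * n * j ^ 2 / δ) ≤
        C2 * F * ((4/3) * (4:ℝ) ^ c₀ * min ((Δ i) ^ (2 : ℕ))⁻¹ ((Dte) ^ (2 : ℕ))⁻¹) := by
    intro i
    set m : ℝ := min (Δ i)⁻¹ Dte⁻¹ with hmdef
    have hm : 0 < m := lt_min (inv_pos.mpr (hΔ i)) (inv_pos.mpr hDte)
    set A : ℝ := Real.log 2 + Real.log n + Real.log δ⁻¹ + 2 * Real.log (r i) with hAdef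
    have hA0 : 0 ≤ A := by
      have := Real.log_natCast_nonneg (r i)
      rw [hAdef]; linarith
    -- Step 1: bound each log term
    have step1 : ∑ j ∈ Icc 1 (r i), (2 : ℝ) ^ (2 * j) * Real.log (2 * n * j ^ 2 / δ) ≤
        (∑ j ∈ Icc 1 (r i), (2:ℝ) ^ (2 * j)) * A := by
      rw [Finset.sum_mul]
      apply Finset.sum_le_sum
      intro j hj
      obtain ⟨hj1, hjr⟩ := Finset.mem_Icc.mp hj
      have hjpos : (0:ℝ) < (j:ℝ) := by exact_mod_cast hj1
      have hnpos : (0:ℝ) < (n:ℝ) := by positivity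
      have hlogeq : Real.log (2 * n * j ^ 2 / δ) =
          Real.log 2 + Real.log n + 2 * Real.log j + Real.log δ⁻¹ := by
        rw [div_eq_mul_inv, Real.log_mul (by positivity) (by positivity),
          Real.log_mul (by positivity) (by positivity),
          Real.log_mul (by positivity) (by positivity), Real.log_pow]
        push_cast; ring
      have hjlog : Real.log j ≤ Real.log (r i) :=
        Real.log_le_log hjpos (by exact_mod_cast hjr)
      have : Real.log (2 * n * j ^ 2 / δ) ≤ A := by
        rw [hlogeq, hAdef]; linarith
      exact mul_le_mul_of_nonneg_left this (by positivity)
    -- Step 3: A ≤ C2 * F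
    have hrle : (r i : ℝ) ≤ Real.logb 2 Dte⁻¹ + c₀ := by
      have hmono : Real.logb 2 m ≤ Real.logb 2 Dte⁻¹ := by
        rw [Real.logb, Real.logb]
        exact div_le_div_of_nonneg_right
          (Real.log_le_log hm (min_le_right _ _)) hl2.le
      exact (hr i).trans (add_le_add_left hmono c₀)
    have hrle' : (r i : ℝ) ≤ (1 + c₀) * L / Real.log 2 := by
      have hlb : Real.logb 2 Dte⁻¹ = L / Real.log 2 := by
        rw [Real.logb, hLdef]
      have hLl2 : 1 ≤ L / Real.log 2 := (one_le_div hl2).mpr hL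
      have : c₀ ≤ c₀ * (L / Real.log 2) := le_mul_of_one_le_right hc₀ hLl2
      rw [hlb] at hrle
      rw [mul_div_assoc]
      nlinarith [hrle]
    have hlogr : Real.log (r i) ≤ Real.log L + K0 := by
      have hLpos : 0 < L := lt_of_lt_of_le hl2 hL
      have heq : Real.log ((1 + c₀) * L / Real.log 2) = Real.log L + K0 := by
        rw [Real.log_div (ne_of_gt (mul_pos (by linarith : (0:ℝ) < 1 + c₀) hLpos))
            (ne_of_gt hl2),
          Real.log_mul (by linarith : (1:ℝ) + c₀ ≠ 0).elim (ne_of_gt hLpos), hK0def]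
        ring
      rcases Nat.eq_zero_or_pos (r i) with h0 | hpos
      · rw [h0]; simp only [Nat.cast_zero, Real.log_zero]
        rw [hK0def]; linarith
      · have : Real.log (r i) ≤ Real.log ((1 + c₀) * L / Real.log 2) :=
          Real.log_le_log (by exact_mod_cast hpos) hrle'
        rw [heq] at this; exact this
    have step3 : A ≤ C2 * F := by
      have hlogLF : Real.log L ≤ F - Real.log 2 := by
        rw [hFdef]; linarith
      have hA2F : A ≤ 2 * F + 2 * K0 := by
        rw [hAdef, hFdef]; linarith
      have hdiv : Real.log 2 + 2 * K0 = (Real.log 2 + 2 * K0) / f0 * f0 :=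
        (div_mul_cancel₀ _ (ne_of_gt hf0)).symm
      have hdivle : (Real.log 2 + 2 * K0) / f0 * f0 ≤ (Real.log 2 + 2 * K0) / f0 * F :=
        mul_le_mul_of_nonneg_left hF (by positivity)
      have h2K0 : 2 * K0 ≤ Real.log 2 + 2 * K0 := by linarith
      rw [hC2def]
      linarith
    -- Step 4: 4^(r i) ≤ 4^c₀ * m^2
    have step4 : (4:ℝ) ^ (r i) ≤ (4:ℝ) ^ c₀ * m ^ (2:ℕ) := by
      have h1 : ((4:ℝ) ^ (r i) : ℝ) = (4:ℝ) ^ ((r i : ℝ)) := (Real.rpow_natCast 4 (r i)).symm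
      have h2 : (4:ℝ) ^ ((r i : ℝ)) ≤ (4:ℝ) ^ (Real.logb 2 m + c₀) :=
        Real.rpow_le_rpow_of_exponent_le (by norm_num) (hr i)
      have h3 : (4:ℝ) ^ (Real.logb 2 m + c₀) = (4:ℝ) ^ (Real.logb 2 m) * (4:ℝ) ^ c₀ :=
        Real.rpow_add (by norm_num) _ _
      have h4 : (4:ℝ) ^ (Real.logb 2 m) = m ^ (2:ℕ) := by
        have e2 : m ^ (2:ℕ) = (2:ℝ) ^ (Real.logb 2 m * ((2:ℕ):ℝ)) := by
          rw [Real.rpow_mul (by norm_num : (0:ℝ) ≤ 2),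
            Real.rpow_logb two_pos (by norm_num) hm, Real.rpow_natCast]
        rw [e2, mul_comm (Real.logb 2 m) (((2:ℕ):ℝ)),
          Real.rpow_mul (by norm_num : (0:ℝ) ≤ 2), Real.rpow_natCast]
        norm_num
      rw [h1]
      calc (4:ℝ) ^ ((r i : ℝ)) ≤ (4:ℝ) ^ (Real.logb 2 m + c₀) := h2
        _ = (4:ℝ) ^ c₀ * m ^ (2:ℕ) := by rw [h3, h4]; ring
    have hmin : m ^ (2:ℕ) = min ((Δ i) ^ (2 : ℕ))⁻¹ ((Dte) ^ (2 : ℕ))⁻¹ := by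
      rw [← inv_pow, ← inv_pow, hmdef]
      rcases le_total (Δ i)⁻¹ Dte⁻¹ with h | h
      · rw [min_eq_left h, min_eq_left (pow_le_pow_left₀ (inv_nonneg.mpr (hΔ i).le) h 2)]
      · rw [min_eq_right h, min_eq_right (pow_le_pow_left₀ (inv_nonneg.mpr hDte.le) h 2)]
    -- combine
    calc ∑ j ∈ Icc 1 (r i), (2 : ℝ) ^ (2 * j) * Real.log (2 * n * j ^ 2 / δ)
        ≤ (∑ j ∈ Icc 1 (r i), (2:ℝ) ^ (2 * j)) * A := step1
      _ ≤ (4/3 * 4 ^ (r i)) * (C2 * F) := by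
          exact mul_le_mul (geom_aux (r i)) step3 hA0 (by positivity)
      _ ≤ (4/3 * ((4:ℝ) ^ c₀ * m ^ (2:ℕ))) * (C2 * F) := by
          exact mul_le_mul_of_nonneg_right
            (mul_le_mul_of_nonneg_left step4 (by norm_num))
            (mul_nonneg hC2.le hFpos.le)
      _ = C2 * F * ((4/3) * (4:ℝ) ^ c₀ * m ^ (2:ℕ)) := by ring
      _ = C2 * F * ((4/3) * (4:ℝ) ^ c₀ * min ((Δ i) ^ (2 : ℕ))⁻¹ ((Dte) ^ (2 : ℕ))⁻¹) := by
          rw [hmin]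
  calc ∑ i : Fin n, ∑ j ∈ Icc 1 (r i),
          (2 : ℝ) ^ (2 * j) * Real.log (2 * n * j ^ 2 / δ)
      ≤ ∑ i : Fin n, C2 * F * ((4/3) * (4:ℝ) ^ c₀ * min ((Δ i) ^ (2 : ℕ))⁻¹ ((Dte) ^ (2 : ℕ))⁻¹) :=
        Finset.sum_le_sum fun i _ => key i
    _ = C2 * (4/3) * (4:ℝ) ^ c₀ * F * ∑ i : Fin n, min ((Δ i) ^ (2 : ℕ))⁻¹ ((Dte) ^ (2 : ℕ))⁻¹ := by
        rw [Finset.mul_sum]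
        apply Finset.sum_congr rfl
        intro i _
        ring
end
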